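/- Let X be a complete metric space, let f_1, …, f_N : X → X be contraction maps (each Lipschitz with some constant < 1), and let K be the attractor, i.e. the unique nonempty compact set with K = f_1(K) ∪ … ∪ f_N(K). Let (I_k)_{k ≥ 0} be independent random variables on a probability space, each uniformly distributed on {1, …, N}. Fix x_0 ∈ K and define the random orbit x_{k+1} = f_{I_k}(x_k). Then with probability one the set {x_k : k ∈ ℕ} is dense in K, i.e. its closure equals K. -/

import Mathlib

open MeasureTheory ProbabilityTheory NNReal ENNReal

set_option linter.unusedSectionVars false

namespace ChaosGameAux

variable {X : Type*} [MetricSpace X] {N : ℕ} (f : Fin N → X → X)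

/-- Apply `f (w 0)`, then `f (w 1)`, ..., then `f (w (m-1))`. -/
def Phi : ℕ → (ℕ → Fin N) → X → X
  | 0, _, z => z
  | m + 1, w, z => f (w m) (Phi m w z)

lemma Phi_congr {m : ℕ} {w w' : ℕ → Fin N} (h : ∀ t, t < m → w t = w' t) (z : X) :
    Phi f m w z = Phi f m w' z := by
  induction m with
  | zero => rfl
  | succ m ih =>
    simp only [Phi, ih fun t ht => h t (ht.trans (Nat.lt_succ_self m)),
      h m (Nat.lt_succ_self m)]

lemma Phi_lipschitz {ρ : ℝ≥0} (hf : ∀ i, LipschitzWith ρ (f i)) (m : ℕ) (w : ℕ → Fin N) :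
    LipschitzWith (ρ ^ m) (Phi f m w) := by
  induction m with
  | zero =>
    rw [pow_zero]
    intro a b
    simp [Phi]
  | succ m ih =>
    have h2 : LipschitzWith (ρ * ρ ^ m) (fun z => f (w m) (Phi f m w z)) :=
      (hf (w m)).comp ih
    rw [pow_succ, mul_comm]
    exact h2

lemma Phi_mem {K : Set X} (hK : ∀ i, f i '' K ⊆ K) {z : X} (hz : z ∈ K) (m : ℕ)
    (w : ℕ → Fin N) : Phi f m w z ∈ K := by
  induction m with
  | zero => exact hz
  | succ m ih => exact hK (w m) ⟨_, ih, rfl⟩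

lemma Phi_surj {K : Set X} (i₀ : Fin N) (hK : K ⊆ ⋃ i, f i '' K) (m : ℕ) :
    ∀ y ∈ K, ∃ w z, z ∈ K ∧ Phi f m w z = y := by
  induction m with
  | zero => exact fun y hy => ⟨fun _ => i₀, y, hy, rfl⟩
  | succ m ih =>
    intro y hy
    rcases Set.mem_iUnion.1 (hK hy) with ⟨i, z, hzK, rfl⟩
    obtain ⟨w, z', hz'K, hz'⟩ := ih z hzK
    refine ⟨fun t => if t = m then i else w t, z', hz'K, ?_⟩
    show f (if m = m then i else w m) (Phi f m _ z') = f i z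
    rw [if_pos rfl, Phi_congr f (w' := w) (fun t ht => if_neg ht.ne) z', hz']

lemma exists_block {Ω : Type*} [MeasurableSpace Ω] (P : Measure Ω) [IsProbabilityMeasure P]
    (I : ℕ → Ω → Fin N) (hmeas : ∀ k, Measurable (I k))
    (hindep : iIndepFun I P)
    (hunif : ∀ k i, P {ω | I k ω = i} = (N : ℝ≥0∞)⁻¹)
    (m : ℕ) (w : ℕ → Fin N) :
    ∀ᵐ ω ∂P, ∃ j, ∀ t, t < m → I (j * m + t) ω = w t := by
  classical
  set s : ℕ → Set Ω := fun i => I i ⁻¹' {w (i % m)} with hs_def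
  have hs_meas : ∀ i, MeasurableSet (s i) := fun i => (hmeas i) (measurableSet_singleton _)
  have hs_prob : ∀ i, P (s i) = (N : ℝ≥0∞)⁻¹ := by
    intro i
    have h1 : s i = {ω | I i ω = w (i % m)} := by ext ω; simp [hs_def]
    rw [h1, hunif]
  set A : ℕ → Set Ω := fun j => ⋂ t ∈ Finset.range m, s (j * m + t) with hA_def
  have hA_image : ∀ j, A j = ⋂ i ∈ (Finset.range m).image (fun t => j * m + t), s i := by
    intro j
    rw [hA_def, Finset.set_biInter_finset_image]
  have hA_meas : ∀ j, MeasurableSet (A j) :=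
    fun j => Finset.measurableSet_biInter _ fun t _ => hs_meas _
  set p : ℝ≥0∞ := ((N : ℝ≥0∞)⁻¹) ^ m with hp_def
  have hs_comap : ∀ i, MeasurableSet[MeasurableSpace.comap (I i) inferInstance] (s i) :=
    fun i => ⟨{w (i % m)}, measurableSet_singleton _, rfl⟩
  have hPA : ∀ j, P (A j) = p := by
    intro j
    rw [hA_image j, hindep.meas_biInter (fun i _ => hs_comap i)]
    rw [Finset.prod_congr rfl (fun i _ => hs_prob i), Finset.prod_const,
      Finset.card_image_of_injective _ (fun a b h => by omega), Finset.card_range]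
  set C : ℕ → Set Ω := fun n => ⋂ j ∈ Finset.range n, (A j)ᶜ with hC_def
  have key : ∀ n, P (C n ∩ (A n)ᶜ) = P (C n) * P ((A n)ᶜ) := by
    intro n
    set mI : ℕ → MeasurableSpace Ω := fun i => MeasurableSpace.comap (I i) inferInstance
      with hmI_def
    have h_le : ∀ i, mI i ≤ ‹MeasurableSpace Ω› := fun i => (hmeas i).comap_le
    have hST : Disjoint {i : ℕ | i < n * m} {i : ℕ | n * m ≤ i} := by
      rw [Set.disjoint_left]
      intro a ha hb
      simp only [Set.mem_setOf_eq] at ha hb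
      omega
    have hInd := indep_iSup_of_disjoint h_le hindep.iIndep hST
    have hmem : ∀ (S : Set ℕ), ∀ i ∈ S, MeasurableSet[⨆ i ∈ S, mI i] (s i) := by
      intro S i hi
      exact (le_iSup₂ (f := fun i (_ : i ∈ S) => mI i) i hi) _ (hs_comap i)
    have hC_meas : MeasurableSet[⨆ i ∈ {i : ℕ | i < n * m}, mI i] (C n) := by
      rw [hC_def]
      refine Finset.measurableSet_biInter _ fun j hj => MeasurableSet.compl ?_
      rw [hA_def]
      refine Finset.measurableSet_biInter _ fun t ht => hmem _ _ ?_
      simp only [Set.mem_setOf_eq]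
      have h1 := Finset.mem_range.1 hj
      have h2 := Finset.mem_range.1 ht
      calc j * m + t < j * m + m := by omega
        _ = (j + 1) * m := by ring
        _ ≤ n * m := Nat.mul_le_mul_right m (by omega)
    have hA_meas' : MeasurableSet[⨆ i ∈ {i : ℕ | n * m ≤ i}, mI i] ((A n)ᶜ) := by
      refine MeasurableSet.compl ?_
      rw [hA_def]
      refine Finset.measurableSet_biInter _ fun t ht => hmem _ _ ?_
      simp only [Set.mem_setOf_eq]
      omega
    exact (hInd.indepSet_of_measurableSet hC_meas hA_meas').measure_inter_eq_mul
  have hPC : ∀ n, P (C n) = (1 - p) ^ n := by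
    intro n
    induction n with
    | zero => simp [hC_def]
    | succ n ih =>
      have hsplit : C (n + 1) = C n ∩ (A n)ᶜ := by
        simp only [hC_def]
        rw [Finset.range_add_one, Finset.set_biInter_insert, Set.inter_comm]
      rw [hsplit, key n, ih, prob_compl_eq_one_sub (hA_meas n), hPA n, pow_succ]
  have hp_ne : p ≠ 0 := by
    rw [hp_def]
    exact pow_ne_zero _ (ENNReal.inv_ne_zero.2 (ENNReal.natCast_ne_top N))
  have hlt : 1 - p < 1 := ENNReal.sub_lt_self ENNReal.one_ne_top one_ne_zero hp_ne
  have htend := ENNReal.tendsto_pow_atTop_nhds_zero_of_lt_one hlt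
  have hzero : P (⋂ j, (A j)ᶜ) = 0 := by
    refine le_antisymm (ge_of_tendsto' htend fun n => ?_) zero_le
    rw [← hPC n]
    refine measure_mono ?_
    intro ω hω
    simp only [hC_def, Set.mem_iInter] at hω ⊢
    exact fun j _ => hω j
  have hmod : ∀ j t, t < m → (j * m + t) % m = t := by
    intro j t ht
    rw [Nat.add_comm, Nat.add_mul_mod_self_right, Nat.mod_eq_of_lt ht]
  have hset : ∀ j ω, ω ∈ A j ↔ ∀ t, t < m → I (j * m + t) ω = w t := by
    intro j ω
    rw [hA_def]
    simp only [Set.mem_iInter, Finset.mem_range, hs_def, Set.mem_preimage,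
      Set.mem_singleton_iff]
    constructor
    · intro h t ht
      have := h t ht
      rwa [hmod j t ht] at this
    · intro h t ht
      rw [hmod j t ht]
      exact h t ht
  rw [ae_iff]
  have hfinal : {ω | ¬ ∃ j, ∀ t, t < m → I (j * m + t) ω = w t} = ⋂ j, (A j)ᶜ := by
    ext ω
    simp only [Set.mem_setOf_eq, Set.mem_iInter, Set.mem_compl_iff, not_exists]
    exact forall_congr' fun j => not_congr (hset j ω).symm
  rw [hfinal]
  exact hzero

end ChaosGameAux

open ChaosGameAux

/-- Chaos game with uniform random choices: starting at a point `x₀` of the attractor `K`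
of an IFS of contractions and applying at each step a map chosen independently and
uniformly at random, with probability one the orbit is dense in `K`. -/
theorem chaos_game_orbit_dense_in_attractor
    {X : Type*} [MetricSpace X] [CompleteSpace X]
    {N : ℕ} (hN : 1 ≤ N) (f : Fin N → X → X) (r : Fin N → ℝ≥0)
    (hr : ∀ i, r i < 1) (hf : ∀ i, LipschitzWith (r i) (f i))
    (K : Set X) (hKne : K.Nonempty) (hKc : IsCompact K)
    (hK : K = ⋃ i, f i '' K)
    {Ω : Type*} [MeasurableSpace Ω] (P : Measure Ω) [IsProbabilityMeasure P]
    (I : ℕ → Ω → Fin N) (hmeas : ∀ k, Measurable (I k))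
    (hindep : iIndepFun I P)
    (hunif : ∀ k i, P {ω | I k ω = i} = (N : ℝ≥0∞)⁻¹)
    (x₀ : X) (hx₀ : x₀ ∈ K)
    (x : ℕ → Ω → X) (hx0 : ∀ ω, x 0 ω = x₀)
    (hx : ∀ k ω, x (k + 1) ω = f (I k ω) (x k ω)) :
    ∀ᵐ ω ∂P, closure (Set.range fun k => x k ω) = K := by
  classical
  have i₀ : Fin N := ⟨0, hN⟩
  set ρ : ℝ≥0 := Finset.univ.sup r with hρ_def
  have hρ1 : ρ < 1 := by
    rw [hρ_def]
    exact (Finset.sup_lt_iff (by norm_num)).2 fun i _ => hr i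
  have hfρ : ∀ i, LipschitzWith ρ (f i) := fun i =>
    (hf i).weaken (Finset.le_sup (Finset.mem_univ i))
  have hKsub : ∀ i, f i '' K ⊆ K := fun i =>
    (Set.subset_iUnion (fun i => f i '' K) i).trans (le_of_eq hK.symm)
  have hxK : ∀ k ω, x k ω ∈ K := by
    intro k
    induction k with
    | zero => intro ω; rw [hx0]; exact hx₀
    | succ k ih => intro ω; rw [hx k ω]; exact hKsub _ ⟨_, ih ω, rfl⟩
  have hxPhi : ∀ k m ω, x (k + m) ω = Phi f m (fun t => I (k + t) ω) (x k ω) := by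
    intro k m ω
    induction m with
    | zero => rfl
    | succ m ih =>
      show x ((k + m) + 1) ω = _
      rw [hx (k + m) ω, ih]
      rfl
  haveI := hKc.isSeparable.separableSpace
  obtain ⟨D, hDc, hDd⟩ := TopologicalSpace.exists_countable_dense K
  set Y : Set X := Subtype.val '' D with hY_def
  have hYc : Y.Countable := hDc.image _
  have hYK : Y ⊆ K := by
    rintro _ ⟨z, _, rfl⟩
    exact z.2
  have hKY : K ⊆ closure Y := by
    intro y hy
    have h1 : (⟨y, hy⟩ : K) ∈ closure D := hDd _
    exact map_mem_closure continuous_subtype_val h1 fun z hz => Set.mem_image_of_mem _ hz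
  have hcore : ∀ y ∈ K, ∀ n : ℕ, ∀ᵐ ω ∂P, ∃ k, dist (x k ω) y < 1 / ((n : ℝ) + 1) := by
    intro y hy n
    set ε : ℝ := 1 / ((n : ℝ) + 1) with hε_def
    have hε : 0 < ε := by rw [hε_def]; positivity
    have h1 : Filter.Tendsto (fun m => (ρ : ℝ) ^ m * Metric.diam K) Filter.atTop (nhds 0) := by
      simpa using
        (tendsto_pow_atTop_nhds_zero_of_lt_one ρ.coe_nonneg hρ1).mul_const (Metric.diam K)
    obtain ⟨m, hm⟩ := (h1.eventually (gt_mem_nhds hε)).exists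
    obtain ⟨w, z₀, hz₀K, hz₀⟩ := Phi_surj f i₀ (le_of_eq hK) m y hy
    have hw : ∀ z ∈ K, dist (Phi f m w z) y < ε := by
      intro z hz
      have hl := (Phi_lipschitz f hfρ m w).dist_le_mul z z₀
      calc dist (Phi f m w z) y = dist (Phi f m w z) (Phi f m w z₀) := by rw [hz₀]
        _ ≤ ((ρ ^ m : ℝ≥0) : ℝ) * dist z z₀ := hl
        _ ≤ (ρ : ℝ) ^ m * Metric.diam K := by
            push_cast
            exact mul_le_mul_of_nonneg_left
              (Metric.dist_le_diam_of_mem hKc.isBounded hz hz₀K) (by positivity)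
        _ < ε := hm
    filter_upwards [exists_block P I hmeas hindep hunif m w] with ω hω
    obtain ⟨j, hj⟩ := hω
    refine ⟨j * m + m, ?_⟩
    rw [hxPhi (j * m) m ω, Phi_congr f (fun t ht => hj t ht) (x (j * m) ω)]
    exact hw _ (hxK (j * m) ω)
  have hae : ∀ᵐ ω ∂P, ∀ y ∈ Y, ∀ n : ℕ, ∃ k, dist (x k ω) y < 1 / ((n : ℝ) + 1) := by
    rw [ae_ball_iff hYc]
    intro y hy
    rw [ae_all_iff]
    exact fun n => hcore y (hYK hy) n
  filter_upwards [hae] with ω hω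
  apply Set.Subset.antisymm
  · refine closure_minimal ?_ hKc.isClosed
    rintro _ ⟨k, rfl⟩
    exact hxK k ω
  · refine hKY.trans (closure_minimal ?_ isClosed_closure)
    intro y hy
    rw [Metric.mem_closure_iff]
    intro ε hε
    obtain ⟨n, hn⟩ := exists_nat_gt (1 / ε)
    obtain ⟨k, hk⟩ := hω y hy n
    refine ⟨x k ω, ⟨k, rfl⟩, ?_⟩
    rw [dist_comm]
    refine hk.trans ?_
    rw [div_lt_iff₀ (by positivity)]
    have h2 := (div_lt_iff₀ hε).1 (hn.trans (lt_add_one (n : ℝ)))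
    linarith
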